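/- The function Ω₁(t,x) = e^{2x}·(e^{x+t} - ¼e^{x-t})⁻², defined where e^{x+t} ≠ ¼e^{x-t}, satisfies the equation ∂ₜ²ω - ∂ₓ²ω = 2·e^{ω} for ω = log Ω₁, i.e. the conformally flat metric Ω₁·η has constant scalar curvature R = 2. -/

import Mathlib

open Real

theorem stmt_6 (Ω₁ : ℝ → ℝ → ℝ)
    (hΩ₁ : ∀ t x, Ω₁ t x = Real.exp (2 * x) / (Real.exp (x + t) - (1 / 4) * Real.exp (x - t)) ^ 2)
    (ω : ℝ → ℝ → ℝ) (hω : ∀ t x, ω t x = Real.log (Ω₁ t x)) :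
    ∀ t x : ℝ, Real.exp (x + t) ≠ (1 / 4) * Real.exp (x - t) →
      iteratedDeriv 2 (fun t' => ω t' x) t - iteratedDeriv 2 (fun x' => ω t x') x
        = 2 * Real.exp (ω t x) := by
  intro t x hne
  -- t-direction setup
  set f : ℝ → ℝ := fun s => Real.exp (x + s) - (1/4) * Real.exp (x - s) with hfdef
  set f' : ℝ → ℝ := fun s => Real.exp (x + s) + (1/4) * Real.exp (x - s) with hf'def
  have hft : f t ≠ 0 := sub_ne_zero.mpr hne
  have hadd : ∀ s : ℝ, HasDerivAt (fun s' : ℝ => Real.exp (x + s')) (Real.exp (x + s)) s := by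
    intro s
    have h1 : HasDerivAt (fun s' : ℝ => x + s') 1 s := (hasDerivAt_id s).const_add x
    have := (Real.hasDerivAt_exp (x + s)).comp s h1
    simp only [mul_one] at this
    exact this
  have hsub : ∀ s : ℝ, HasDerivAt (fun s' : ℝ => Real.exp (x - s')) (-Real.exp (x - s)) s := by
    intro s
    have h1 : HasDerivAt (fun s' : ℝ => x - s') (-1) s := (hasDerivAt_id s).const_sub x
    have := (Real.hasDerivAt_exp (x - s)).comp s h1
    simp only [mul_neg, mul_one] at this
    exact this
  have hfd : ∀ s, HasDerivAt f (f' s) s := by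
    intro s
    have := (hadd s).sub (((hsub s).const_mul (1/4 : ℝ)))
    exact this.congr_deriv (by simp only [hf'def]; ring)
  have hfd' : ∀ s, HasDerivAt f' (f s) s := by
    intro s
    have := (hadd s).add (((hsub s).const_mul (1/4 : ℝ)))
    exact this.congr_deriv (by simp only [hfdef]; ring)
  -- omega formula
  have ωeq : ∀ s, f s ≠ 0 → ω s x = 2 * x - Real.log ((f s)^2) := by
    intro s hs
    rw [hω, hΩ₁, Real.log_div (Real.exp_ne_zero _) (pow_ne_zero 2 hs), Real.log_exp]
  have hS : IsOpen {s : ℝ | f s ≠ 0} := by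
    have : Continuous f := by fun_prop
    exact isOpen_ne.preimage this
  set D : ℝ → ℝ := fun s => -(2 * f s * f' s) / (f s)^2 with hDdef
  have hg : ∀ s, f s ≠ 0 → HasDerivAt (fun s' => ω s' x) (D s) s := by
    intro s hs
    have h1 : HasDerivAt (fun s' => (f s')^2) ((2:ℕ) * f s ^ 1 * f' s) s := (hfd s).pow 2
    have h2 : HasDerivAt (fun s' => Real.log ((f s')^2))
        (((f s)^2)⁻¹ * ((2:ℕ) * f s ^ 1 * f' s)) s :=
      by have := (Real.hasDerivAt_log (pow_ne_zero 2 hs)).comp s h1; exact this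
    have h3 : HasDerivAt (fun s' => 2 * x - Real.log ((f s')^2))
        (-(((f s)^2)⁻¹ * ((2:ℕ) * f s ^ 1 * f' s))) s := h2.const_sub (2 * x)
    have h4 : (fun s' => ω s' x) =ᶠ[nhds s] (fun s' => 2 * x - Real.log ((f s')^2)) := by
      filter_upwards [hS.mem_nhds hs] with s' hs' using ωeq s' hs'
    have h5 := h3.congr_of_eventuallyEq h4
    exact h5.congr_deriv (by simp only [hDdef]; push_cast; rw [div_eq_mul_inv]; ring)
  have hderivg : ∀ s, f s ≠ 0 → deriv (fun s' => ω s' x) s = D s := fun s hs => (hg s hs).deriv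
  have h2nd : deriv (deriv (fun s' => ω s' x)) t = deriv D t := by
    apply Filter.EventuallyEq.deriv_eq
    filter_upwards [hS.mem_nhds hft] with s hs using hderivg s hs
  have hN : HasDerivAt (fun s => -(2 * f s * f' s))
      (-(2 * f' t * f' t + 2 * f t * f t)) t := by
    have := (((hfd t).const_mul (2:ℝ)).mul (hfd' t)).neg
    exact this
  have hM : HasDerivAt (fun s => (f s)^2) ((2:ℕ) * f t ^ 1 * f' t) t := (hfd t).pow 2
  have hD : HasDerivAt D
      ((-(2 * f' t * f' t + 2 * f t * f t) * (f t)^2 - -(2 * f t * f' t) * ((2:ℕ) * f t ^ 1 * f' t)) / ((f t)^2)^2) t :=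
    hN.div hM (pow_ne_zero 2 hft)
  have key : Real.exp (x + t) * Real.exp (x - t) = Real.exp (2 * x) := by
    rw [← Real.exp_add]; ring_nf
  have hDval : deriv D t = 2 * Real.exp (2 * x) / (f t)^2 := by
    rw [hD.deriv]
    have h2 : f' t * f' t - f t * f t = Real.exp (2 * x) := by
      simp only [hfdef, hf'def]
      nlinarith [key]
    field_simp
    push_cast
    nlinarith [h2, sq_nonneg (f t)]
  -- x-direction
  have hc : Real.exp t - (1/4) * Real.exp (-t) ≠ 0 := by
    intro h
    apply hft
    have e1 : Real.exp (x + t) = Real.exp x * Real.exp t := Real.exp_add x t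
    have e2 : Real.exp (x - t) = Real.exp x * Real.exp (-t) := by
      rw [show x - t = x + -t by ring, Real.exp_add]
    simp only [hfdef, e1, e2]
    rw [show Real.exp x * Real.exp t - 1/4 * (Real.exp x * Real.exp (-t))
        = Real.exp x * (Real.exp t - 1/4 * Real.exp (-t)) by ring, h, mul_zero]
  set p : ℝ → ℝ := fun x' => Real.exp (x' + t) - (1/4) * Real.exp (x' - t) with hpdef
  have hp : ∀ x', p x' ≠ 0 := by
    intro x'
    have e1 : Real.exp (x' + t) = Real.exp x' * Real.exp t := Real.exp_add x' t
    have e2 : Real.exp (x' - t) = Real.exp x' * Real.exp (-t) := by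
      rw [show x' - t = x' + -t by ring, Real.exp_add]
    simp only [hpdef, e1, e2]
    rw [show Real.exp x' * Real.exp t - 1/4 * (Real.exp x' * Real.exp (-t))
        = Real.exp x' * (Real.exp t - 1/4 * Real.exp (-t)) by ring]
    exact mul_ne_zero (Real.exp_ne_zero x') hc
  have hpd : ∀ x', HasDerivAt p (p x') x' := by
    intro x'
    have h1 : HasDerivAt (fun s : ℝ => s + t) 1 x' := (hasDerivAt_id x').add_const t
    have h2 : HasDerivAt (fun s : ℝ => s - t) 1 x' := (hasDerivAt_id x').sub_const t
    have e1 : HasDerivAt (fun s : ℝ => Real.exp (s + t)) (Real.exp (x' + t)) x' := by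
      have := (Real.hasDerivAt_exp (x' + t)).comp x' h1
      simp only [mul_one] at this
      exact this
    have e2 : HasDerivAt (fun s : ℝ => Real.exp (s - t)) (Real.exp (x' - t)) x' := by
      have := (Real.hasDerivAt_exp (x' - t)).comp x' h2
      simp only [mul_one] at this
      exact this
    have := e1.sub (e2.const_mul (1/4 : ℝ))
    exact this.congr_deriv (by simp only [hpdef])
  have hωx : ∀ x', ω t x' = 2 * x' - Real.log ((p x')^2) := by
    intro x'
    rw [hω, hΩ₁, Real.log_div (Real.exp_ne_zero _) (pow_ne_zero 2 (hp x')), Real.log_exp]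
  have hk : ∀ x', HasDerivAt (fun x'' => ω t x'') 0 x' := by
    intro x'
    have h1 : HasDerivAt (fun x'' => (p x'')^2) ((2:ℕ) * p x' ^ 1 * p x') x' := (hpd x').pow 2
    have h2 : HasDerivAt (fun x'' => Real.log ((p x'')^2))
        (((p x')^2)⁻¹ * ((2:ℕ) * p x' ^ 1 * p x')) x' :=
      by have := (Real.hasDerivAt_log (pow_ne_zero 2 (hp x'))).comp x' h1; exact this
    have h3 := (hasDerivAt_id x').const_mul (2:ℝ)
    have h4 := ((hasDerivAt_id x').const_mul (2:ℝ)).sub h2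
    have h5 : (fun x'' => ω t x'') = fun x'' => 2 * x'' - Real.log ((p x'')^2) := by
      funext x''; exact hωx x''
    rw [h5]
    have hpx := hp x'
    exact h4.congr_deriv (by push_cast; field_simp; ring)
  have hderivk : deriv (fun x'' => ω t x'') = fun _ => 0 := by
    funext x'; exact (hk x').deriv
  -- assemble
  have hlhs1 : iteratedDeriv 2 (fun t' => ω t' x) t = 2 * Real.exp (2 * x) / (f t)^2 := by
    rw [show (2:ℕ) = 1 + 1 from rfl, iteratedDeriv_succ, iteratedDeriv_one, h2nd, hDval]
  have hlhs2 : iteratedDeriv 2 (fun x' => ω t x') x = 0 := by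
    rw [show (2:ℕ) = 1 + 1 from rfl, iteratedDeriv_succ, iteratedDeriv_one, hderivk]
    simp
  have hrhs : Real.exp (ω t x) = Real.exp (2 * x) / (f t)^2 := by
    rw [hω, hΩ₁, Real.exp_log]
    positivity
  rw [hlhs1, hlhs2, hrhs]
  ring
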